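/- Let n ≥ 2 and let c_1, …, c_n be nonnegative real numbers such that c_n = 0 and c_i > 0 for all 1 ≤ i ≤ n−1. Then the integral over the unit sphere S^{n-1} ⊂ ℝ^n of the function ξ ↦ (∑_{i=1}^n c_i ξ_i²)^{-n/2} with respect to the surface measure σ is infinite, i.e. ∫_{S^{n-1}} (∑_{i=1}^{n-1} c_i ξ_i²)^{-n/2} dσ(ξ) = +∞. -/

import Mathlib

set_option maxHeartbeats 1000000

open MeasureTheory ENNReal NNReal Pointwise

/-- If `c_n = 0` and `cᵢ > 0` for `i < n`, then the (lower Lebesgue) integral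
over the unit sphere `S^{n-1} ⊆ ℝⁿ` of `ξ ↦ (∑ cᵢ ξᵢ²)^{-n/2}` is infinite. -/
theorem sphere_integral_degenerate_quadratic_form_eq_top (n : ℕ) (hn : 2 ≤ n)
    (c : Fin n → ℝ) (hc0 : ∀ i, 0 ≤ c i)
    (hlast : c ⟨n - 1, by omega⟩ = 0)
    (hpos : ∀ i : Fin n, (i : ℕ) < n - 1 → 0 < c i) :
    ∫⁻ ξ in Metric.sphere (0 : EuclideanSpace ℝ (Fin n)) 1,
        (ENNReal.ofReal (∑ i, c i * ξ i ^ 2)) ^ (-(n : ℝ) / 2) ∂μH[(n : ℝ) - 1] = ⊤ := by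
  obtain ⟨m, rfl⟩ : ∃ m, n = m + 1 := ⟨n - 1, by omega⟩
  have hm : 1 ≤ m := by omega
  have hexp : ((m + 1 : ℕ) : ℝ) - 1 = (m : ℝ) := by push_cast; ring
  rw [hexp]
  -- the constant C
  set C : ℝ := 1 + ∑ i, c i with hC
  have hCpos : 0 < C := by
    have : 0 ≤ ∑ i, c i := Finset.sum_nonneg fun i _ => hc0 i
    simp only [hC]; linarith
  have hcle : ∀ i, c i ≤ C := by
    intro i
    have h1 : c i ≤ ∑ j, c j :=
      Finset.single_le_sum (fun j _ => hc0 j) (Finset.mem_univ i)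
    simp only [hC]; linarith
  have hclast : c (Fin.last m) = 0 := hlast
  -- exponent
  set a : ℝ := ((m : ℝ) + 1) / 2 with ha
  have hapos : 0 < a := by positivity
  have hnegexp : (-(((m + 1 : ℕ) : ℝ)) / 2) = -a := by push_cast [ha]; ring
  -- projection
  set Q : EuclideanSpace ℝ (Fin (m + 1)) → (Fin m → ℝ) :=
    fun ξ j => ξ (Fin.castSucc j) with hQdef
  have hQ : LipschitzWith 1 Q := by
    apply LipschitzWith.of_dist_le_mul
    intro x y
    rw [NNReal.coe_one, one_mul]
    rw [dist_pi_le_iff dist_nonneg]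
    intro j
    show dist (x (Fin.castSucc j)) (y (Fin.castSucc j)) ≤ dist x y
    calc dist (x (Fin.castSucc j)) (y (Fin.castSucc j))
        = Real.sqrt (dist (x (Fin.castSucc j)) (y (Fin.castSucc j)) ^ 2) :=
          (Real.sqrt_sq dist_nonneg).symm
      _ ≤ Real.sqrt (∑ i, dist (x i) (y i) ^ 2) :=
          Real.sqrt_le_sqrt (Finset.single_le_sum (f := fun i => dist (x i) (y i) ^ 2)
            (fun i _ => sq_nonneg _) (Finset.mem_univ (Fin.castSucc j)))
      _ = dist x y := (EuclideanSpace.dist_eq x y).symm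
  -- cap and disc
  set cap : ℝ → Set (EuclideanSpace ℝ (Fin (m + 1))) := fun r =>
    Metric.sphere 0 1 ∩ {ξ | ∑ j : Fin m, ξ (Fin.castSucc j) ^ 2 ≤ r ^ 2} with hcap
  set D : ℝ → Set (Fin m → ℝ) := fun r => {y | ∑ j, y j ^ 2 ≤ r ^ 2} with hD
  have hcap_meas : ∀ r, MeasurableSet (cap r) := by
    intro r
    apply Metric.isClosed_sphere.measurableSet.inter
    have hcont : Continuous fun ξ : EuclideanSpace ℝ (Fin (m+1)) =>
        ∑ j : Fin m, ξ (Fin.castSucc j) ^ 2 := by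
      apply continuous_finset_sum
      intro j _
      exact ((EuclideanSpace.proj (Fin.castSucc j) :
        EuclideanSpace ℝ (Fin (m+1)) →L[ℝ] ℝ).continuous).pow 2
    exact (isClosed_le hcont continuous_const).measurableSet
  -- D r ⊆ Q '' cap r
  have hsub : ∀ r : ℝ, 0 < r → r ≤ 1 → D r ⊆ Q '' cap r := by
    intro r hr hr1 y hy
    have hS : ∑ j, y j ^ 2 ≤ r ^ 2 := hy
    have hS1 : ∑ j, y j ^ 2 ≤ 1 := le_trans hS (by nlinarith)
    have hS0 : 0 ≤ ∑ j, y j ^ 2 := Finset.sum_nonneg fun j _ => sq_nonneg _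
    set t : ℝ := Real.sqrt (1 - ∑ j, y j ^ 2) with ht
    have ht2 : t ^ 2 = 1 - ∑ j, y j ^ 2 := Real.sq_sqrt (by linarith)
    refine ⟨WithLp.toLp 2 (Fin.snoc y t : Fin (m+1) → ℝ), ⟨?_, ?_⟩, ?_⟩
    · rw [mem_sphere_zero_iff_norm, EuclideanSpace.norm_eq]
      have : ∑ i : Fin (m+1), ‖(Fin.snoc y t : Fin (m+1) → ℝ) i‖ ^ 2 = 1 := by
        rw [Fin.sum_univ_castSucc]
        simp only [Fin.snoc_castSucc, Fin.snoc_last, Real.norm_eq_abs, sq_abs]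
        rw [ht2]; ring
      rw [this, Real.sqrt_one]
    · show ∑ j : Fin m, (Fin.snoc y t : Fin (m+1) → ℝ) (Fin.castSucc j) ^ 2 ≤ r ^ 2
      simpa only [Fin.snoc_castSucc] using hS
    · funext j
      simp only [hQdef, WithLp.ofLp_toLp, Fin.snoc_castSucc]
  -- volume of D
  have hDr_smul : ∀ r : ℝ, 0 < r → D r = r • D 1 := by
    intro r hr
    ext y
    rw [Set.mem_smul_set_iff_inv_smul_mem₀ (ne_of_gt hr)]
    simp only [hD, Set.mem_setOf_eq, Pi.smul_apply, smul_eq_mul, one_pow]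
    constructor
    · intro h
      have : ∑ j, (r⁻¹ * y j) ^ 2 = r⁻¹ ^ 2 * ∑ j, y j ^ 2 := by
        rw [Finset.mul_sum]; exact Finset.sum_congr rfl fun j _ => by ring
      rw [this]
      rw [inv_pow]
      rw [inv_mul_le_iff₀ (by positivity)]
      linarith [h]
    · intro h
      have h2 : ∑ j, (r⁻¹ * y j) ^ 2 = r⁻¹ ^ 2 * ∑ j, y j ^ 2 := by
        rw [Finset.mul_sum]; exact Finset.sum_congr rfl fun j _ => by ring
      rw [h2, inv_pow, inv_mul_le_iff₀ (by positivity), mul_one] at h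
      nlinarith [h]
  set V : ℝ≥0∞ := volume (D 1) with hV
  have hV0 : 0 < V := by
    have hopen : IsOpen {y : Fin m → ℝ | ∑ j, y j ^ 2 < 1} := by
      have : Continuous fun y : Fin m → ℝ => ∑ j, y j ^ 2 := by
        continuity
      exact isOpen_lt this continuous_const
    have hne : ({y : Fin m → ℝ | ∑ j, y j ^ 2 < 1}).Nonempty := ⟨0, by simp⟩
    have := hopen.measure_pos volume hne
    refine lt_of_lt_of_le this (measure_mono ?_)
    intro y hy
    show ∑ j, y j ^ 2 ≤ (1:ℝ) ^ 2
    simpa using le_of_lt hy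
  have hVtop : V < ⊤ := by
    have hsub2 : D 1 ⊆ Metric.closedBall (0 : Fin m → ℝ) 1 := by
      intro y hy
      have hy' : ∑ j, y j ^ 2 ≤ 1 := by simpa [hD] using hy
      rw [Metric.mem_closedBall, dist_zero_right, pi_norm_le_iff_of_nonneg zero_le_one]
      intro j
      rw [Real.norm_eq_abs, abs_le]
      constructor <;> nlinarith [Finset.single_le_sum (f := fun i => y i ^ 2)
        (fun i _ => sq_nonneg _) (Finset.mem_univ j), sq_nonneg (y j)]
    exact lt_of_le_of_lt (measure_mono hsub2)
      (MeasureTheory.measure_closedBall_lt_top)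
  have hvolDr : ∀ r : ℝ, 0 < r → volume (D r) = ENNReal.ofReal (r ^ m) * V := by
    intro r hr
    rw [hDr_smul r hr, Measure.addHaar_smul_of_nonneg volume hr.le]
    congr 2
    simp [Module.finrank_pi]
  -- Hausdorff measure lower bound for cap
  have hcapμ : ∀ r : ℝ, 0 < r → r ≤ 1 →
      ENNReal.ofReal (r ^ m) * V ≤ μH[(m : ℝ)] (cap r) := by
    intro r hr hr1
    have h1 : volume (D r) ≤ μH[(m : ℝ)] (Q '' cap r) := by
      have heq : (μH[(m : ℝ)] : Measure (Fin m → ℝ)) = volume := by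
        have := MeasureTheory.hausdorffMeasure_pi_real (ι := Fin m)
        simpa using this
      rw [heq]
      exact measure_mono (hsub r hr hr1)
    have h2 : μH[(m : ℝ)] (Q '' cap r) ≤ μH[(m : ℝ)] (cap r) := by
      have := hQ.hausdorffMeasure_image_le (by positivity : (0:ℝ) ≤ (m:ℝ)) (cap r)
      simpa using this
    calc ENNReal.ofReal (r ^ m) * V = volume (D r) := (hvolDr r hr).symm
      _ ≤ _ := h1
      _ ≤ _ := h2
  -- key lower bound for the integral
  have key : ∀ r : ℝ, 0 < r → r ≤ 1 →
      ENNReal.ofReal ((C ^ a * r)⁻¹) * V ≤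
      ∫⁻ ξ in Metric.sphere (0 : EuclideanSpace ℝ (Fin (m + 1))) 1,
        (ENNReal.ofReal (∑ i, c i * ξ i ^ 2)) ^ (-((m + 1 : ℕ) : ℝ) / 2) ∂μH[(m : ℝ)] := by
    intro r hr hr1
    have hpoint : ∀ ξ ∈ cap r,
        (ENNReal.ofReal (C * r ^ 2)) ^ (-a) ≤
        (ENNReal.ofReal (∑ i, c i * ξ i ^ 2)) ^ (-((m + 1 : ℕ) : ℝ) / 2) := by
      intro ξ hξ
      rw [hnegexp]
      have hsum : ∑ i, c i * ξ i ^ 2 ≤ C * r ^ 2 := by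
        rw [Fin.sum_univ_castSucc, hclast, zero_mul, add_zero]
        calc ∑ j : Fin m, c (Fin.castSucc j) * ξ (Fin.castSucc j) ^ 2
            ≤ ∑ j : Fin m, C * ξ (Fin.castSucc j) ^ 2 :=
              Finset.sum_le_sum fun j _ =>
                mul_le_mul_of_nonneg_right (hcle _) (sq_nonneg _)
          _ = C * ∑ j : Fin m, ξ (Fin.castSucc j) ^ 2 := (Finset.mul_sum _ _ _).symm
          _ ≤ C * r ^ 2 := mul_le_mul_of_nonneg_left hξ.2 hCpos.le
      rw [ENNReal.rpow_neg, ENNReal.rpow_neg]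
      exact ENNReal.inv_le_inv.mpr
        (ENNReal.rpow_le_rpow (ENNReal.ofReal_le_ofReal hsum) hapos.le)
    have h1 : (ENNReal.ofReal (C * r ^ 2)) ^ (-a) * μH[(m : ℝ)] (cap r) ≤
        ∫⁻ ξ in cap r,
          (ENNReal.ofReal (∑ i, c i * ξ i ^ 2)) ^ (-((m + 1 : ℕ) : ℝ) / 2) ∂μH[(m : ℝ)] := by
      rw [← setLIntegral_const]
      exact setLIntegral_mono' (hcap_meas r) hpoint
    have h2 : ∫⁻ ξ in cap r,
          (ENNReal.ofReal (∑ i, c i * ξ i ^ 2)) ^ (-((m + 1 : ℕ) : ℝ) / 2) ∂μH[(m : ℝ)] ≤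
        ∫⁻ ξ in Metric.sphere (0 : EuclideanSpace ℝ (Fin (m + 1))) 1,
          (ENNReal.ofReal (∑ i, c i * ξ i ^ 2)) ^ (-((m + 1 : ℕ) : ℝ) / 2) ∂μH[(m : ℝ)] :=
      lintegral_mono' (Measure.restrict_mono Set.inter_subset_left le_rfl) le_rfl
    have hconst : ENNReal.ofReal ((C ^ a * r)⁻¹) * V =
        (ENNReal.ofReal (C * r ^ 2)) ^ (-a) * (ENNReal.ofReal (r ^ m) * V) := by
      have hx : (0:ℝ) < C * r ^ 2 := by positivity
      rw [ENNReal.rpow_neg, ENNReal.ofReal_rpow_of_pos hx]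
      have hreal : (C * r ^ 2) ^ a = C ^ a * r ^ (m + 1) := by
        rw [Real.mul_rpow hCpos.le (by positivity)]
        congr 1
        rw [← Real.rpow_natCast r 2, ← Real.rpow_natCast r (m + 1),
          ← Real.rpow_mul hr.le]
        congr 1
        push_cast [ha]
        ring
      rw [hreal]
      rw [← mul_assoc]
      congr 1
      rw [← ENNReal.div_eq_inv_mul, ← ENNReal.ofReal_div_of_pos (by positivity)]
      congr 1
      rw [pow_succ]
      field_simp
    calc ENNReal.ofReal ((C ^ a * r)⁻¹) * V
        = (ENNReal.ofReal (C * r ^ 2)) ^ (-a) * (ENNReal.ofReal (r ^ m) * V) := hconst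
      _ ≤ (ENNReal.ofReal (C * r ^ 2)) ^ (-a) * μH[(m : ℝ)] (cap r) :=
          mul_le_mul_right (hcapμ r hr hr1) _
      _ ≤ _ := h1
      _ ≤ _ := h2
  -- conclude by contradiction
  by_contra hI
  set I := ∫⁻ ξ in Metric.sphere (0 : EuclideanSpace ℝ (Fin (m + 1))) 1,
      (ENNReal.ofReal (∑ i, c i * ξ i ^ 2)) ^ (-((m + 1 : ℕ) : ℝ) / 2) ∂μH[(m : ℝ)] with hIdef
  have hItop : I ≠ ⊤ := hI
  have hVne : V ≠ 0 := hV0.ne'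
  have hIV : I / V ≠ ⊤ := (ENNReal.div_lt_top hItop hVne).ne
  set B := (I / V).toReal with hBdef
  have hB0 : 0 ≤ B := ENNReal.toReal_nonneg
  have hB : ∀ r : ℝ, 0 < r → r ≤ 1 → (C ^ a * r)⁻¹ ≤ B := by
    intro r hr hr1
    have h3 : ENNReal.ofReal ((C ^ a * r)⁻¹) ≤ I / V :=
      (ENNReal.le_div_iff_mul_le (Or.inl hVne) (Or.inl hVtop.ne)).mpr (key r hr hr1)
    calc (C ^ a * r)⁻¹ = (ENNReal.ofReal ((C ^ a * r)⁻¹)).toReal := by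
          rw [ENNReal.toReal_ofReal (by positivity)]
      _ ≤ B := ENNReal.toReal_mono hIV h3
  have hCa : 0 < C ^ a := Real.rpow_pos_of_pos hCpos a
  set r0 : ℝ := min 1 ((C ^ a)⁻¹ * (B + 1)⁻¹) with hr0def
  have hr0pos : 0 < r0 := lt_min one_pos (by positivity)
  have hr01 : r0 ≤ 1 := min_le_left _ _
  have h4 := hB r0 hr0pos hr01
  have hx : 0 < C ^ a * r0 := by positivity
  have h5 : C ^ a * r0 ≤ (B + 1)⁻¹ := by
    calc C ^ a * r0 ≤ C ^ a * ((C ^ a)⁻¹ * (B + 1)⁻¹) :=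
          mul_le_mul_of_nonneg_left (min_le_right _ _) hCa.le
      _ = (B + 1)⁻¹ := by field_simp
  have h7 : 1 ≤ B * (C ^ a * r0) := by
    calc (1:ℝ) = (C ^ a * r0)⁻¹ * (C ^ a * r0) := (inv_mul_cancel₀ hx.ne').symm
      _ ≤ B * (C ^ a * r0) := mul_le_mul_of_nonneg_right h4 hx.le
  have h8 : B * (C ^ a * r0) ≤ B * (B + 1)⁻¹ :=
    mul_le_mul_of_nonneg_left h5 hB0
  have h9 : B * (B + 1)⁻¹ < 1 := by
    rw [← div_eq_mul_inv]
    rw [div_lt_one (by positivity)]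
    linarith
  linarith
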